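/- Let (x_t) be a sequence of random variables such that conditionally on the past, x_{t+1} is Gaussian with mean bounded by c₁ and variance bounded by c₂ (both uniformly in t and the past). Then for every p ∈ ℕ, sup_{t≥1} E[|x_t|ᵖ] ≤ E[(c₁ + |W|)ᵖ] where W ~ N(0, c₂), independent of the initial condition x₀. -/

import Mathlib

open MeasureTheory ProbabilityTheory Real
open scoped ENNReal NNReal

lemma measurable_gaussianReal_param {s : Set ℝ} (hs : MeasurableSet s) :
    Measurable (fun q : ℝ × NNReal => gaussianReal q.1 q.2 s) := by
  have hpdf : Measurable (fun q : (ℝ × NNReal) × ℝ => gaussianPDF q.1.1 q.1.2 q.2) := by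
    unfold gaussianPDF gaussianPDFReal
    apply Measurable.ennreal_ofReal
    apply Measurable.mul
    · exact (Measurable.sqrt (measurable_const.mul measurable_fst.snd.coe_nnreal_real)).inv
    · apply Measurable.exp
      apply Measurable.div
      · exact ((measurable_snd.sub measurable_fst.fst).pow_const 2).neg
      · exact measurable_const.mul measurable_fst.snd.coe_nnreal_real
  have hind : Measurable (fun q : (ℝ × NNReal) × ℝ =>
      (Prod.snd ⁻¹' s).indicator (fun q : (ℝ × NNReal) × ℝ => gaussianPDF q.1.1 q.1.2 q.2) q) :=
    hpdf.indicator (measurable_snd hs)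
  have hint : Measurable (fun q : ℝ × NNReal => ∫⁻ x in s, gaussianPDF q.1 q.2 x) := by
    have h : Measurable fun q : ℝ × NNReal => ∫⁻ x,
        (Prod.snd ⁻¹' s).indicator
          (fun r : (ℝ × NNReal) × ℝ => gaussianPDF r.1.1 r.1.2 r.2) (q, x) ∂(volume : Measure ℝ) :=
      Measurable.lintegral_prod_right' hind
    have heq2 : (fun q : ℝ × NNReal => ∫⁻ x in s, gaussianPDF q.1 q.2 x)
        = fun q : ℝ × NNReal => ∫⁻ x, (Prod.snd ⁻¹' s).indicator
            (fun r : (ℝ × NNReal) × ℝ => gaussianPDF r.1.1 r.1.2 r.2) (q, x) ∂(volume : Measure ℝ) := by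
      funext q
      rw [← lintegral_indicator hs]
      refine lintegral_congr fun xx => ?_
      by_cases hxx : xx ∈ s <;>
        simp [Set.indicator_of_mem, Set.indicator_of_notMem, hxx, Set.mem_preimage]
    rw [heq2]
    exact h
  have heq : (fun q : ℝ × NNReal => gaussianReal q.1 q.2 s)
      = fun q : ℝ × NNReal => if q.2 = 0 then s.indicator (fun _ => (1 : ℝ≥0∞)) q.1
          else ∫⁻ x in s, gaussianPDF q.1 q.2 x := by
    funext q
    by_cases h : q.2 = 0
    · simp only [h, if_true, gaussianReal_zero_var]
      rw [Measure.dirac_apply' _ hs]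
      rfl
    · rw [if_neg h, gaussianReal_apply _ h]
  rw [heq]
  refine Measurable.ite (measurable_snd (measurableSet_singleton 0)) ?_ hint
  have h2 : (fun q : ℝ × NNReal => s.indicator (fun _ => (1 : ℝ≥0∞)) q.1)
      = (Prod.fst ⁻¹' s).indicator (fun _ => (1 : ℝ≥0∞)) := by
    funext q
    by_cases hq : q.1 ∈ s <;>
      simp [Set.indicator_of_mem, Set.indicator_of_notMem, hq, Set.mem_preimage]
  rw [h2]
  exact measurable_const.indicator (measurable_fst hs)

lemma gauss_moment_le {c₁ : ℝ} (hc₁ : 0 ≤ c₁) {c₂ : NNReal} (p : ℕ)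
    {μ : ℝ} {v : NNReal} (hμ : |μ| ≤ c₁) (hv : v ≤ c₂) :
    ∫⁻ y, ENNReal.ofReal (|y| ^ p) ∂(gaussianReal μ v)
      ≤ ∫⁻ y, ENNReal.ofReal ((c₁ + |y|) ^ p) ∂(gaussianReal 0 c₂) := by
  have hmg : Measurable fun y : ℝ => ENNReal.ofReal (|y| ^ p) :=
    ((measurable_id.abs).pow_const p).ennreal_ofReal
  have hmg2 : Measurable fun y : ℝ => ENNReal.ofReal ((c₁ + |y|) ^ p) :=
    ((measurable_const.add measurable_id.abs).pow_const p).ennreal_ofReal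
  have step1 : ∫⁻ y, ENNReal.ofReal (|y| ^ p) ∂(gaussianReal μ v)
      ≤ ∫⁻ y, ENNReal.ofReal ((c₁ + |y|) ^ p) ∂(gaussianReal 0 v) := by
    have h1 : gaussianReal μ v = (gaussianReal 0 v).map (· + μ) := by
      rw [gaussianReal_map_add_const, zero_add]
    rw [h1, lintegral_map hmg (measurable_add_const μ)]
    refine lintegral_mono fun y => ENNReal.ofReal_le_ofReal ?_
    refine pow_le_pow_left₀ (abs_nonneg _) ?_ p
    calc |y + μ| ≤ |y| + |μ| := abs_add_le _ _
      _ ≤ c₁ + |y| := by linarith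
  rcases eq_or_ne c₂ 0 with h0 | h0
  · have hv0 : v = 0 := le_antisymm (h0 ▸ hv) (zero_le)
    subst h0; subst hv0; exact step1
  · have hc₂pos : (0 : ℝ) < c₂ := by
      have := NNReal.coe_pos.mpr (pos_iff_ne_zero.mpr h0); exact this
    set a := Real.sqrt ((v : ℝ) / (c₂ : ℝ)) with ha
    have ha0 : 0 ≤ a := Real.sqrt_nonneg _
    have ha1 : a ≤ 1 := by
      rw [ha, show (1 : ℝ) = Real.sqrt 1 by simp]
      apply Real.sqrt_le_sqrt
      rw [div_le_one hc₂pos]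
      exact_mod_cast hv
    have hasq : a ^ 2 * (c₂ : ℝ) = (v : ℝ) := by
      rw [ha, Real.sq_sqrt (by positivity)]
      field_simp
    have h2 : gaussianReal 0 v = (gaussianReal 0 c₂).map (a * ·) := by
      rw [gaussianReal_map_const_mul a, mul_zero]
      congr 1
      apply NNReal.coe_injective
      simpa using hasq.symm
    refine step1.trans ?_
    rw [h2, lintegral_map hmg2 (measurable_const_mul a)]
    refine lintegral_mono fun y => ENNReal.ofReal_le_ofReal ?_
    refine pow_le_pow_left₀ (by positivity) ?_ p
    have : |a * y| ≤ |y| := by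
      rw [abs_mul, abs_of_nonneg ha0]
      nlinarith [abs_nonneg y]
    linarith

/-- p-boundedness of conditionally Gaussian sequences: if, conditionally on
the past (a filtration `ℱ`), `x_{t+1}` is Gaussian with mean bounded by `c₁`
and variance bounded by `c₂` (uniformly in `t` and the past), then for every
`p ∈ ℕ`, `sup_{t ≥ 1} E[|x_t|ᵖ] ≤ E[(c₁ + |W|)ᵖ]` with `W ~ N(0, c₂)`,
independently of the initial condition `x₀`. -/
theorem cond_gaussian_sequence_p_bounded {Ω : Type*} {m0 : MeasurableSpace Ω}
    (P : Measure Ω) [IsProbabilityMeasure P]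
    (ℱ : ℕ → MeasurableSpace Ω) (hℱ : ∀ t, ℱ t ≤ m0)
    (hmono : Monotone ℱ)
    (x : ℕ → Ω → ℝ) (hadapted : ∀ t, Measurable[ℱ t] (x t))
    (μf : ℕ → Ω → ℝ) (vf : ℕ → Ω → NNReal)
    (hμmeas : ∀ t, Measurable[ℱ t] (μf t)) (hvmeas : ∀ t, Measurable[ℱ t] (vf t))
    (c₁ : ℝ) (c₂ : NNReal) (hc₁ : 0 ≤ c₁)
    (hμb : ∀ t, ∀ᵐ ω ∂P, |μf t ω| ≤ c₁) (hvb : ∀ t, ∀ᵐ ω ∂P, vf t ω ≤ c₂)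
    (hcond : ∀ t, ∀ s : Set ℝ, MeasurableSet s →
      (fun ω => ((gaussianReal (μf t ω) (vf t ω)) s).toReal)
        =ᵐ[P] P[fun ω => s.indicator (fun _ => (1 : ℝ)) (x (t + 1) ω)|ℱ t])
    (p : ℕ) :
    ∀ t, 1 ≤ t →
      (∫⁻ ω, ENNReal.ofReal (|x t ω| ^ p) ∂P)
        ≤ ∫⁻ y, ENNReal.ofReal ((c₁ + |y|) ^ p) ∂(gaussianReal 0 c₂) := by
  intro t ht
  obtain ⟨n, rfl⟩ : ∃ n, t = n + 1 := ⟨t - 1, (Nat.succ_pred_eq_of_pos ht).symm⟩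
  have hx : Measurable (x (n + 1)) := (hadapted (n + 1)).mono (hℱ (n + 1)) le_rfl
  set κ : Ω → Measure ℝ := fun ω => gaussianReal (μf n ω) (vf n ω) with hκ
  have hκmeas : Measurable κ := by
    apply Measure.measurable_of_measurable_coe
    intro s hs
    exact (measurable_gaussianReal_param hs).comp
      (((hμmeas n).mono (hℱ n) le_rfl).prodMk ((hvmeas n).mono (hℱ n) le_rfl))
  have hlaw : P.map (x (n + 1)) = P.bind κ := by
    ext s hs
    rw [Measure.map_apply hx hs, Measure.bind_apply hs hκmeas.aemeasurable]
    have hrw : (fun ω => s.indicator (fun _ => (1 : ℝ)) (x (n + 1) ω))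
        = (x (n + 1) ⁻¹' s).indicator (fun _ => (1 : ℝ)) := by
      funext ω
      by_cases h : x (n + 1) ω ∈ s <;> simp [Set.indicator_apply, h]
    have hint : Integrable (fun ω => s.indicator (fun _ => (1 : ℝ)) (x (n + 1) ω)) P := by
      rw [hrw]
      exact (integrable_const (1 : ℝ)).indicator (hx hs)
    have h1 : ∫ ω, (κ ω s).toReal ∂P
        = ∫ ω, s.indicator (fun _ => (1 : ℝ)) (x (n + 1) ω) ∂P := by
      rw [integral_congr_ae (hcond n s hs)]
      exact integral_condExp (hℱ n)
    have h2 : ∫ ω, s.indicator (fun _ => (1 : ℝ)) (x (n + 1) ω) ∂P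
        = (P (x (n + 1) ⁻¹' s)).toReal := by
      rw [hrw, integral_indicator_const (1 : ℝ) (hx hs), smul_eq_mul, mul_one, Measure.real]
    have hκs : Measurable fun ω => κ ω s := (measurable_gaussianReal_param hs).comp
      (((hμmeas n).mono (hℱ n) le_rfl).prodMk ((hvmeas n).mono (hℱ n) le_rfl))
    have h3 : ∫ ω, (κ ω s).toReal ∂P = (∫⁻ ω, κ ω s ∂P).toReal := by
      refine integral_toReal hκs.aemeasurable ?_
      exact ae_of_all _ fun ω => measure_lt_top _ _
    have hfin : ∫⁻ ω, κ ω s ∂P ≠ ⊤ := by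
      refine ne_top_of_le_ne_top (by simp : (1 : ℝ≥0∞) ≠ ⊤) ?_
      calc ∫⁻ ω, κ ω s ∂P ≤ ∫⁻ _, 1 ∂P := lintegral_mono fun ω => prob_le_one
        _ = 1 := by simp
    exact (ENNReal.toReal_eq_toReal_iff' (measure_ne_top _ _) hfin).mp
      ((h2.symm.trans h1.symm).trans h3)
  have hmg : Measurable fun y : ℝ => ENNReal.ofReal (|y| ^ p) :=
    ((measurable_id.abs).pow_const p).ennreal_ofReal
  calc ∫⁻ ω, ENNReal.ofReal (|x (n + 1) ω| ^ p) ∂P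
      = ∫⁻ y, ENNReal.ofReal (|y| ^ p) ∂(P.map (x (n + 1))) := (lintegral_map hmg hx).symm
    _ = ∫⁻ ω, ∫⁻ y, ENNReal.ofReal (|y| ^ p) ∂(κ ω) ∂P := by
        rw [hlaw, Measure.lintegral_bind hκmeas.aemeasurable hmg.aemeasurable]
    _ ≤ ∫⁻ ω, (∫⁻ y, ENNReal.ofReal ((c₁ + |y|) ^ p) ∂(gaussianReal 0 c₂)) ∂P := by
        refine lintegral_mono_ae ?_
        filter_upwards [hμb n, hvb n] with ω h1 h2
        exact gauss_moment_le hc₁ p h1 h2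
    _ = _ := by rw [lintegral_const, measure_univ, mul_one]
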